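/- Let u, w ∈ S_{[a,n]} with u →^k w (there is an increasing k-chain from u to w). Suppose i is a value of u on the interval (k,n], i.e., i = u(t₀) for some t₀ ∈ (k,n], but i is not a fixed value, i.e., there is no t ∈ (k,n] with u(t) = w(t) = i. Then there exists t ∈ [a,k] with w(t) ≥ i. -/

import Mathlib

/-- `w` has finitely many non-fixed points. -/
def FinSupp (w : Equiv.Perm ℤ) : Prop := {i : ℤ | w i ≠ i}.Finite

/-- Descent set of a permutation of ℤ. -/
def Des (w : Equiv.Perm ℤ) : Set ℤ := {i : ℤ | w (i + 1) < w i}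

/-- Number of inversions. -/
noncomputable def permLength (w : Equiv.Perm ℤ) : ℕ :=
  {p : ℤ × ℤ | p.1 < p.2 ∧ w p.2 < w p.1}.ncard

/-- Membership in `S_{[a,n]}`: all non-fixed points lie in `[a,n]`. -/
def InS (a n : ℤ) (w : Equiv.Perm ℤ) : Prop := ∀ i : ℤ, w i ≠ i → a ≤ i ∧ i ≤ n

/-- Cover relation of the `k`-Bruhat order. -/
def BCover (k : ℤ) (u w : Equiv.Perm ℤ) : Prop :=
  ∃ i j : ℤ, i ≤ k ∧ k < j ∧ w = u * Equiv.swap i j ∧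
    permLength w = permLength u + 1

/-- The `k`-Bruhat order: reflexive-transitive closure of the cover relation. -/
def kBruhat (k : ℤ) : Equiv.Perm ℤ → Equiv.Perm ℤ → Prop :=
  Relation.ReflTransGen (BCover k)

/-- There is an increasing `k`-chain from `u` to `w`. -/
def IncTo (k : ℤ) (u w : Equiv.Perm ℤ) : Prop :=
  ∃ (m : ℕ) (us : ℕ → Equiv.Perm ℤ) (ab : ℕ → ℤ × ℤ),
    us 0 = u ∧ us m = w ∧
    (∀ i < m, (ab i).1 ≤ k ∧ k < (ab i).2 ∧
      us (i + 1) = us i * Equiv.swap (ab i).1 (ab i).2 ∧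
      permLength (us (i + 1)) = permLength (us i) + 1) ∧
    (∀ i j : ℕ, i < j → j < m → us i (ab i).1 < us j (ab j).1)

/-- `fix_{(lo,hi]}(u,w) = {u(t) : lo < t ≤ hi, u(t) = w(t)}`. -/
def fixSet (lo hi : ℤ) (u w : Equiv.Perm ℤ) : Set ℤ :=
  {m : ℤ | ∃ t : ℤ, lo < t ∧ t ≤ hi ∧ u t = m ∧ w t = m}

namespace Stmt8Aux

def Inv (w : Equiv.Perm ℤ) : Set (ℤ × ℤ) := {p : ℤ × ℤ | p.1 < p.2 ∧ w p.2 < w p.1}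

lemma permLength_eq (w : Equiv.Perm ℤ) : permLength w = (Inv w).ncard := rfl

/-- sorted swap on pairs -/
def sws (p q : ℤ) (e : ℤ × ℤ) : ℤ × ℤ :=
  if Equiv.swap p q e.1 < Equiv.swap p q e.2 then (Equiv.swap p q e.1, Equiv.swap p q e.2)
  else (Equiv.swap p q e.2, Equiv.swap p q e.1)

lemma sws_invol (p q : ℤ) (e : ℤ × ℤ) (he : e.1 < e.2) : sws p q (sws p q e) = e := by
  have hne : Equiv.swap p q e.1 ≠ Equiv.swap p q e.2 := (Equiv.injective _).ne he.ne
  rcases hne.lt_or_gt with h | h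
  · simp [sws, h, Equiv.swap_apply_self, he]
  · simp [sws, h, h.not_gt, Equiv.swap_apply_self, he.not_gt]

/-- membership in the exceptional middle set -/
def Mid (p q : ℤ) (e : ℤ × ℤ) : Prop :=
  (e.1 = p ∧ p < e.2 ∧ e.2 < q) ∨ (p < e.1 ∧ e.1 < q ∧ e.2 = q)

lemma L0 (p q : ℤ) (hpq : p < q) (e : ℤ × ℤ) (he : e.1 < e.2)
    (hM : ¬ Mid p q e) (hne : ¬ (e.1 = p ∧ e.2 = q)) :
    Equiv.swap p q e.1 < Equiv.swap p q e.2 := by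
  unfold Mid at hM
  simp only [Equiv.swap_apply_def]
  split_ifs <;> omega

lemma sws_mid (p q : ℤ) (hpq : p < q) (e : ℤ × ℤ) (hM : Mid p q e) :
    Mid p q (sws p q e) := by
  rcases hM with ⟨h1, h2, h3⟩ | ⟨h1, h2, h3⟩
  · have hq : Equiv.swap p q e.1 = q := by rw [h1, Equiv.swap_apply_left]
    have hy : Equiv.swap p q e.2 = e.2 := Equiv.swap_apply_of_ne_of_ne (by omega) (by omega)
    have hs : sws p q e = (e.2, q) := by
      unfold sws; rw [hq, hy, if_neg (by omega : ¬ (q:ℤ) < e.2)]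
    rw [hs]; right; exact ⟨h2, h3, rfl⟩
  · have hx : Equiv.swap p q e.1 = e.1 := Equiv.swap_apply_of_ne_of_ne (by omega) (by omega)
    have hq : Equiv.swap p q e.2 = p := by rw [h3, Equiv.swap_apply_right]
    have hs : sws p q e = (p, e.1) := by
      unfold sws; rw [hx, hq, if_neg (by omega : ¬ e.1 < p)]
    rw [hs]; left; exact ⟨rfl, h1, h2⟩

lemma sws_fst_lt_snd (p q : ℤ) (e : ℤ × ℤ) (he : e.1 ≠ e.2) :
    (sws p q e).1 < (sws p q e).2 := by
  have hne : Equiv.swap p q e.1 ≠ Equiv.swap p q e.2 := (Equiv.injective _).ne he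
  rcases hne.lt_or_gt with h | h
  · simp [sws, h]
  · simp [sws, h, h.not_gt]

lemma cover_lt (u : Equiv.Perm ℤ) (p q : ℤ) (hpq : p < q)
    (hlen : permLength (u * Equiv.swap p q) = permLength u + 1) : u p < u q := by
  by_contra hge
  have hne : u p ≠ u q := (Equiv.injective u).ne hpq.ne
  have hlt : u q < u p := lt_of_le_of_ne (not_lt.mp hge) hne.symm
  set v := u * Equiv.swap p q with hvdef
  have hv : ∀ x, v x = u (Equiv.swap p q x) := fun x => rfl
  have hvp : v p = u q := by rw [hv, Equiv.swap_apply_left]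
  have hvq : v q = u p := by rw [hv, Equiv.swap_apply_right]
  -- (p,q) is an inversion of u but not of v
  have hpq_u : ((p, q) : ℤ × ℤ) ∈ Inv u := ⟨hpq, hlt⟩
  have hpq_v : ((p, q) : ℤ × ℤ) ∉ Inv v := by
    intro hmem
    exact absurd hmem.2 (by rw [hvp, hvq]; exact not_lt.mpr hlt.le)
  -- pointwise transfer lemmas
  have hmem1 : ∀ e ∈ Inv v, ¬ Mid p q e → sws p q e ∈ Inv u ∧ sws p q e ≠ (p, q) := by
    intro e he hM
    have hne2 : ¬ (e.1 = p ∧ e.2 = q) := by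
      rintro ⟨h1, h2⟩
      exact hpq_v (by rwa [show ((p,q) : ℤ × ℤ) = e from (Prod.ext h1.symm h2.symm)])
    have hs := L0 p q hpq e he.1 hM hne2
    have hsw : sws p q e = (Equiv.swap p q e.1, Equiv.swap p q e.2) := if_pos hs
    constructor
    · rw [hsw]
      refine ⟨hs, ?_⟩
      have := he.2
      rw [hv, hv] at this
      simpa [Equiv.swap_apply_self] using this
    · rw [hsw]
      intro hc
      have h1 : Equiv.swap p q e.1 = p := congrArg Prod.fst hc
      have h2 : Equiv.swap p q e.2 = q := congrArg Prod.snd hc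
      have e1 : e.1 = q := by
        have := congrArg (Equiv.swap p q) h1
        simpa [Equiv.swap_apply_self] using this
      have e2 : e.2 = p := by
        have := congrArg (Equiv.swap p q) h2
        simpa [Equiv.swap_apply_self] using this
      have := he.1; omega
  have hmem2 : ∀ e ∈ Inv v, Mid p q e → e ∈ Inv u := by
    intro e he hM
    rcases hM with ⟨h1, h2, h3⟩ | ⟨h1, h2, h3⟩
    · have hy : v e.2 = u e.2 := by
        rw [hv, Equiv.swap_apply_of_ne_of_ne (by omega) (by omega)]
      have h4 := he.2
      rw [hy, h1, hvp] at h4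
      exact ⟨he.1, by rw [h1]; omega⟩
    · have hx : v e.1 = u e.1 := by
        rw [hv, Equiv.swap_apply_of_ne_of_ne (by omega) (by omega)]
      have h4 := he.2
      rw [hx, h3, hvq] at h4
      exact ⟨he.1, by rw [h3]; omega⟩
  have hmem3 : ∀ e ∈ Inv u, ¬ Mid p q e → e ≠ ((p,q) : ℤ × ℤ) → sws p q e ∈ Inv v := by
    intro e he hM hne2
    have hne3 : ¬ (e.1 = p ∧ e.2 = q) := by
      rintro ⟨h1, h2⟩; exact hne2 (Prod.ext h1 h2)
    have hs := L0 p q hpq e he.1 hM hne3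
    have hsw : sws p q e = (Equiv.swap p q e.1, Equiv.swap p q e.2) := if_pos hs
    rw [hsw]
    refine ⟨hs, ?_⟩
    rw [hv, hv]
    simpa [Equiv.swap_apply_self] using he.2
  -- the middle set is finite
  have hMidfin : {e : ℤ × ℤ | Mid p q e}.Finite := by
    apply Set.Finite.subset (Set.Finite.prod
      ((Set.finite_singleton p).union (Set.finite_Ioo p q))
      ((Set.finite_Ioo p q).union (Set.finite_singleton q)))
    rintro ⟨x, y⟩ (⟨h1, h2, h3⟩ | ⟨h1, h2, h3⟩)
    · exact ⟨Or.inl h1, Or.inl ⟨h2, h3⟩⟩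
    · exact ⟨Or.inr ⟨h1, h2⟩, Or.inr h3⟩
  by_cases hfin : (Inv u).Finite
  · -- finite case : inject Inv v into Inv u \ {(p,q)}
    classical
    set φ : ℤ × ℤ → ℤ × ℤ := fun e => if Mid p q e then e else sws p q e with hφ
    have himg : φ '' (Inv v) ⊆ Inv u \ {((p,q) : ℤ × ℤ)} := by
      rintro _ ⟨e, he, rfl⟩
      by_cases hM : Mid p q e
      · rw [hφ]; simp only [if_pos hM]
        refine ⟨hmem2 e he hM, ?_⟩
        simp only [Set.mem_singleton_iff]
        rintro rfl
        rcases hM with ⟨h1, h2, h3⟩ | ⟨h1, h2, h3⟩ <;> simp_all <;> omega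
      · rw [hφ]; simp only [if_neg hM]
        obtain ⟨h1, h2⟩ := hmem1 e he hM
        exact ⟨h1, h2⟩
    have hinj : Set.InjOn φ (Inv v) := by
      intro e he e' he' heq
      rw [hφ] at heq
      by_cases h1 : Mid p q e <;> by_cases h2 : Mid p q e'
      · simpa [h1, h2] using heq
      · simp only [if_pos h1, if_neg h2] at heq
        exfalso
        apply h2
        have : sws p q (sws p q e') = sws p q e := by rw [heq]
        rw [sws_invol p q e' he'.1] at this
        rw [this]
        exact sws_mid p q hpq e h1
      · simp only [if_neg h1, if_pos h2] at heq
        exfalso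
        apply h1
        have : sws p q (sws p q e) = sws p q e' := by rw [heq]
        rw [sws_invol p q e he.1] at this
        rw [this]
        exact sws_mid p q hpq e' h2
      · simp only [if_neg h1, if_neg h2] at heq
        have := congrArg (sws p q) heq
        rwa [sws_invol p q e he.1, sws_invol p q e' he'.1] at this
    have hvfin : (Inv v).Finite :=
      Set.Finite.of_finite_image ((hfin.diff).subset himg) hinj
    have h1 : (Inv v).ncard = (φ '' (Inv v)).ncard := (Set.ncard_image_of_injOn hinj).symm
    have h2 : (φ '' (Inv v)).ncard ≤ (Inv u \ {((p,q) : ℤ × ℤ)}).ncard :=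
      Set.ncard_le_ncard himg (hfin.diff)
    have h3 : (Inv u \ {((p,q) : ℤ × ℤ)}).ncard = (Inv u).ncard - 1 :=
      Set.ncard_diff_singleton_of_mem hpq_u
    have h4 : 0 < (Inv u).ncard := (Set.ncard_pos hfin).mpr ⟨_, hpq_u⟩
    rw [permLength_eq, permLength_eq] at hlen
    omega
  · -- infinite case
    have huInf : (Inv u).Infinite := hfin
    set A : Set (ℤ × ℤ) := Inv u \ ({e : ℤ × ℤ | Mid p q e} ∪ {((p,q) : ℤ × ℤ)}) with hA
    have hAinf : A.Infinite := huInf.diff (hMidfin.union (Set.finite_singleton _))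
    have hinjA : Set.InjOn (sws p q) A := by
      intro e he e' he' heq
      have := congrArg (sws p q) heq
      rwa [sws_invol p q e he.1.1, sws_invol p q e' he'.1.1] at this
    have himgA : sws p q '' A ⊆ Inv v := by
      rintro _ ⟨e, ⟨heu, hem⟩, rfl⟩
      simp only [Set.mem_union, Set.mem_setOf_eq, Set.mem_singleton_iff, not_or] at hem
      exact hmem3 e heu hem.1 hem.2
    have hvInf : (Inv v).Infinite := (hAinf.image hinjA).mono himgA
    rw [permLength_eq, permLength_eq, hvInf.ncard, huInf.ncard] at hlen
    exact absurd hlen (by omega)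

lemma step_mono_le (u : Equiv.Perm ℤ) (p q k : ℤ) (hq : k < q)
    (hlt : u p < u q) : ∀ t, t ≤ k → u t ≤ (u * Equiv.swap p q) t := by
  intro t ht
  rcases eq_or_ne t p with rfl | hne1
  · rw [Equiv.Perm.mul_apply, Equiv.swap_apply_left]; exact hlt.le
  · have hne2 : t ≠ q := by omega
    rw [Equiv.Perm.mul_apply, Equiv.swap_apply_of_ne_of_ne hne1 hne2]

end Stmt8Aux

open Stmt8Aux in
theorem stmt8 (a n k : ℤ) (u w : Equiv.Perm ℤ) (hu : InS a n u) (hw : InS a n w)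
    (h : IncTo k u w) (i t₀ : ℤ) (ht₀1 : k < t₀) (ht₀2 : t₀ ≤ n)
    (hval : u t₀ = i)
    (hnotfix : ¬ ∃ t : ℤ, k < t ∧ t ≤ n ∧ u t = i ∧ w t = i) :
    ∃ t : ℤ, a ≤ t ∧ t ≤ k ∧ i ≤ w t := by
  obtain ⟨m, us, ab, h0, hm, hstep, -⟩ := h
  -- each step is an increasing swap
  have hcov : ∀ s, s < m → us s (ab s).1 < us s (ab s).2 := by
    intro s hs
    obtain ⟨hp, hq, heq, hlen⟩ := hstep s hs
    exact cover_lt (us s) _ _ (lt_of_le_of_lt hp hq) (by rw [← heq]; exact hlen)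
  -- monotonicity of values at positions ≤ k
  have hmono : ∀ t, t ≤ k → ∀ s s' : ℕ, s ≤ s' → s' ≤ m → us s t ≤ us s' t := by
    intro t ht s s' hss' hs'm
    induction s', hss' using Nat.le_induction with
    | base => exact le_rfl
    | succ s' hss' ih =>
      refine le_trans (ih (by omega)) ?_
      obtain ⟨hp, hq, heq, hlen⟩ := hstep s' (by omega)
      rw [heq]
      exact step_mono_le (us s') _ _ k hq (hcov s' (by omega)) t ht
  -- recursion for the position of the value i
  have hposrec : ∀ s, s < m →
      (us (s+1))⁻¹ i = Equiv.swap (ab s).1 (ab s).2 ((us s)⁻¹ i) := by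
    intro s hs
    rw [(hstep s hs).2.2.1]
    simp [mul_inv_rev, Equiv.swap_inv, Equiv.Perm.mul_apply]
  set t₁ := w⁻¹ i with ht1
  have hwt1 : w t₁ = i := Equiv.apply_symm_apply w i
  by_cases hcase : t₁ ≤ k
  · refine ⟨t₁, ?_, hcase, hwt1.ge⟩
    have hut1 : u t₁ ≠ i := by
      intro hu1
      have : t₁ = t₀ := u.injective (hu1.trans hval.symm)
      omega
    by_contra hlt_a
    have h1 : u t₁ = t₁ := by by_contra hne; exact hlt_a (hu t₁ hne).1
    have h2 : w t₁ = t₁ := by by_contra hne; exact hlt_a (hw t₁ hne).1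
    exact hut1 (h1.trans (h2.symm.trans hwt1))
  push_neg at hcase
  by_cases hall : ∀ s, s ≤ m → k < (us s)⁻¹ i
  · -- the value i never visits a position ≤ k : its position is constant
    exfalso
    have hconst : ∀ s, s ≤ m → (us s)⁻¹ i = t₀ := by
      intro s hs
      induction s with
      | zero =>
        rw [h0]
        apply u.injective
        rw [(by exact Equiv.apply_symm_apply u i : u (u⁻¹ i) = i), hval]
      | succ s ih =>
        have hrec := hposrec s (by omega)
        have hpos := ih (by omega)
        rw [hrec, hpos]
        have hp := (hstep s (by omega)).1
        rcases eq_or_ne t₀ (ab s).2 with heq2 | hne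
        · exfalso
          have h2 := hall (s+1) hs
          rw [hrec, hpos, heq2, Equiv.swap_apply_right] at h2
          omega
        · exact Equiv.swap_apply_of_ne_of_ne (by omega) hne
    have hc := hconst m le_rfl
    rw [hm] at hc
    have hwt0 : w t₀ = i := by rw [← hc, (by exact Equiv.apply_symm_apply w i : w (w⁻¹ i) = i)]
    exact hnotfix ⟨t₀, ht₀1, ht₀2, hval, hwt0⟩
  · push_neg at hall
    obtain ⟨s₀, hs₀m, hs₀⟩ := hall
    have hmk : k < (us m)⁻¹ i := by rw [hm]; exact hcase
    -- find the last time the value i sits at a position ≤ k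
    have hex : ∃ s, s < m ∧ (us s)⁻¹ i ≤ k ∧ k < (us (s+1))⁻¹ i := by
      by_contra hcon
      push_neg at hcon
      have hind : ∀ d : ℕ, s₀ + d ≤ m → (us (s₀ + d))⁻¹ i ≤ k := by
        intro d
        induction d with
        | zero => intro _; simp only [Nat.add_zero]; exact hs₀
        | succ d ih =>
          intro hd
          have h5 := hcon (s₀ + d) (by omega) (ih (by omega))
          have he : s₀ + (d + 1) = s₀ + d + 1 := by omega
          rw [he]
          exact h5
      have := hind (m - s₀) (by omega)
      rw [show s₀ + (m - s₀) = m by omega] at this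
      omega
    obtain ⟨s, hsm, hQ, hQ1⟩ := hex
    obtain ⟨hp, hq, heq, hlen⟩ := hstep s hsm
    have hrec := hposrec s hsm
    have hpos_p : (us s)⁻¹ i = (ab s).1 := by
      by_contra hnep
      have hneq : (us s)⁻¹ i ≠ (ab s).2 := by omega
      rw [hrec, Equiv.swap_apply_of_ne_of_ne hnep hneq] at hQ1
      omega
    have husp : us s (ab s).1 = i := by rw [← hpos_p, (by exact Equiv.apply_symm_apply (us s) i : us s ((us s)⁻¹ i) = i)]
    have hcovs : us s (ab s).1 < us s (ab s).2 := hcov s hsm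
    have hnext : us (s+1) (ab s).1 = us s (ab s).2 := by
      rw [heq, Equiv.Perm.mul_apply, Equiv.swap_apply_left]
    have hup : u (ab s).1 ≤ i := by
      have := hmono (ab s).1 hp 0 s (Nat.zero_le _) hsm.le
      rw [h0] at this
      omega
    have hwp : i < w (ab s).1 := by
      have h2 := hmono (ab s).1 hp (s+1) m (by omega) le_rfl
      rw [hm] at h2
      omega
    refine ⟨(ab s).1, ?_, hp, hwp.le⟩
    by_contra hna
    have h1 : u (ab s).1 = (ab s).1 := by
      by_contra hne; exact hna (hu _ hne).1
    have h2 : w (ab s).1 = (ab s).1 := by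
      by_contra hne; exact hna (hw _ hne).1
    omega
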